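/- Let C ⊆ ℝⁿ be a nonempty closed convex set. If dom σ_C is closed and σ_C is continuous relative to dom σ_C, then C is approximately M-decomposable. -/

import Mathlib

open scoped InnerProductSpace Pointwise ENNReal
open Metric Filter

/-- The support function `σ_C(d) = sup_{x ∈ C} ⟪d, x⟫` of a set `C ⊆ ℝⁿ`,
with values in the extended reals. -/
noncomputable def suppFun {n : ℕ} (C : Set (EuclideanSpace ℝ (Fin n)))
    (d : EuclideanSpace ℝ (Fin n)) : EReal :=
  ⨆ x ∈ C, ((⟪d, x⟫_ℝ : ℝ) : EReal)

/-- The effective domain `dom σ_C = {d : σ_C(d) < +∞}` of the support function. -/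
def suppDom {n : ℕ} (C : Set (EuclideanSpace ℝ (Fin n))) :
    Set (EuclideanSpace ℝ (Fin n)) :=
  {d | suppFun C d < ⊤}

/-- The recession cone `rec C` of a set `C`. -/
def recCone {n : ℕ} (C : Set (EuclideanSpace ℝ (Fin n))) :
    Set (EuclideanSpace ℝ (Fin n)) :=
  {y | ∀ x ∈ C, ∀ t : ℝ, 0 ≤ t → x + t • y ∈ C}

/-- The truncation `C_r = (C ∩ rB) + rec C` of `C` of radius `r`. -/
def trunc {n : ℕ} (C : Set (EuclideanSpace ℝ (Fin n))) (r : ℝ) :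
    Set (EuclideanSpace ℝ (Fin n)) :=
  (C ∩ closedBall 0 r) + recCone C

/-- `C` is approximately M-decomposable: for every `ε > 0` there is `r > 0`
with `C ⊆ C_r + εB`. -/
def ApproxMDecomposable {n : ℕ} (C : Set (EuclideanSpace ℝ (Fin n))) : Prop :=
  ∀ ε > (0 : ℝ), ∃ r > (0 : ℝ), C ⊆ trunc C r + closedBall 0 ε

/-- `C` is M-decomposable: `C = M + rec C` for some compact convex `M`. -/
def MDecomposable {n : ℕ} (C : Set (EuclideanSpace ℝ (Fin n))) : Prop :=
  ∃ M : Set (EuclideanSpace ℝ (Fin n)), IsCompact M ∧ Convex ℝ M ∧ C = M + recCone C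

/-- `C` is hyperbolic: `C ⊆ M + rec C` for some compact convex `M`. -/
def Hyperbolic {n : ℕ} (C : Set (EuclideanSpace ℝ (Fin n))) : Prop :=
  ∃ M : Set (EuclideanSpace ℝ (Fin n)), IsCompact M ∧ Convex ℝ M ∧ C ⊆ M + recCone C

/-- The polar cone `K° = {d : ⟪d, x⟫ ≤ 0 for all x ∈ K}` of a cone `K`. -/
def polarCone {n : ℕ} (K : Set (EuclideanSpace ℝ (Fin n))) :
    Set (EuclideanSpace ℝ (Fin n)) :=
  {d | ∀ x ∈ K, ⟪d, x⟫_ℝ ≤ 0}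


section Aux

variable {n : ℕ}

lemma le_suppFun {C : Set (EuclideanSpace ℝ (Fin n))} {x : EuclideanSpace ℝ (Fin n)}
    (hx : x ∈ C) (d : EuclideanSpace ℝ (Fin n)) :
    ((⟪d, x⟫_ℝ : ℝ) : EReal) ≤ suppFun C d :=
  le_iSup₂ (f := fun x (_ : x ∈ C) => ((⟪d, x⟫_ℝ : ℝ) : EReal)) x hx

lemma suppFun_ne_bot {C : Set (EuclideanSpace ℝ (Fin n))} (hne : C.Nonempty)
    (d : EuclideanSpace ℝ (Fin n)) : suppFun C d ≠ ⊥ := by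
  obtain ⟨x, hx⟩ := hne
  exact ((EReal.bot_lt_coe _).trans_le (le_suppFun hx d)).ne'

lemma suppFun_eq_coe {C : Set (EuclideanSpace ℝ (Fin n))} (hne : C.Nonempty)
    {d : EuclideanSpace ℝ (Fin n)} (hd : d ∈ suppDom C) :
    suppFun C d = ((suppFun C d).toReal : EReal) :=
  (EReal.coe_toReal hd.ne (suppFun_ne_bot hne d)).symm

lemma inner_le_toReal_suppFun {C : Set (EuclideanSpace ℝ (Fin n))} (hne : C.Nonempty)
    {d : EuclideanSpace ℝ (Fin n)} (hd : d ∈ suppDom C)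
    {x : EuclideanSpace ℝ (Fin n)} (hx : x ∈ C) :
    ⟪d, x⟫_ℝ ≤ (suppFun C d).toReal := by
  have h := (le_suppFun hx d).trans_eq (suppFun_eq_coe hne hd)
  exact_mod_cast h

lemma mem_suppDom_of_bound {C : Set (EuclideanSpace ℝ (Fin n))}
    {d : EuclideanSpace ℝ (Fin n)} {M : ℝ} (hM : ∀ x ∈ C, ⟪d, x⟫_ℝ ≤ M) :
    d ∈ suppDom C := by
  have : suppFun C d ≤ (M : EReal) := iSup₂_le fun x hx => EReal.coe_le_coe_iff.2 (hM x hx)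
  exact lt_of_le_of_lt this (EReal.coe_lt_top M)

lemma zero_mem_suppDom {C : Set (EuclideanSpace ℝ (Fin n))} : (0 : EuclideanSpace ℝ (Fin n)) ∈ suppDom C :=
  mem_suppDom_of_bound (M := 0) fun x _ => by simp

end Aux

section Aux2

variable {n : ℕ}

lemma zero_mem_recCone {C : Set (EuclideanSpace ℝ (Fin n))} :
    (0 : EuclideanSpace ℝ (Fin n)) ∈ recCone C := fun x hx t _ => by simpa using hx

lemma smul_mem_recCone {C : Set (EuclideanSpace ℝ (Fin n))}
    {z : EuclideanSpace ℝ (Fin n)} (hz : z ∈ recCone C) {t : ℝ} (ht : 0 ≤ t) :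
    t • z ∈ recCone C := fun x hx s hs => by
  rw [smul_smul]
  exact hz x hx (s * t) (mul_nonneg hs ht)

lemma convex_recCone {C : Set (EuclideanSpace ℝ (Fin n))} : Convex ℝ (recCone C) := by
  intro y1 h1 y2 h2 a b ha hb hab x hx t ht
  have hx1 : x + (t * a) • y1 ∈ C := h1 x hx (t * a) (mul_nonneg ht ha)
  have hx2 := h2 _ hx1 (t * b) (mul_nonneg ht hb)
  have : x + (t * a) • y1 + (t * b) • y2 = x + t • (a • y1 + b • y2) := by
    rw [smul_add, smul_smul, smul_smul, add_assoc]
  rwa [this] at hx2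

lemma isClosed_recCone {C : Set (EuclideanSpace ℝ (Fin n))} (hcl : IsClosed C) :
    IsClosed (recCone C) := by
  have : recCone C = ⋂ x ∈ C, ⋂ t ∈ Set.Ici (0 : ℝ), (fun y => x + t • y) ⁻¹' C := by
    ext y
    simp only [Set.mem_iInter, Set.mem_preimage, Set.mem_Ici, recCone, Set.mem_setOf_eq]
  rw [this]
  exact isClosed_biInter fun x _ => isClosed_biInter fun t _ =>
    hcl.preimage (continuous_const.add (continuous_id.const_smul t) :
      Continuous fun y : EuclideanSpace ℝ (Fin n) => x + t • y)

lemma isClosed_trunc {C : Set (EuclideanSpace ℝ (Fin n))} (hcl : IsClosed C) (r : ℝ) :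
    IsClosed (trunc C r) :=
  (isClosed_recCone hcl).add_left_of_isCompact
    ((isCompact_closedBall (0 : EuclideanSpace ℝ (Fin n)) r).inter_left hcl)

lemma convex_trunc {C : Set (EuclideanSpace ℝ (Fin n))} (hconv : Convex ℝ C) (r : ℝ) :
    Convex ℝ (trunc C r) :=
  (hconv.inter (convex_closedBall _ _)).add convex_recCone

end Aux2

section Aux3

variable {n : ℕ}

lemma mem_recCone_of_inner_nonpos {C : Set (EuclideanSpace ℝ (Fin n))}
    (hcl : IsClosed C) (hconv : Convex ℝ C) {z : EuclideanSpace ℝ (Fin n)}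
    (hz : ∀ d ∈ suppDom C, ⟪d, z⟫_ℝ ≤ 0) : z ∈ recCone C := by
  intro x hx t ht
  by_contra hp
  obtain ⟨f, u, hfu, hup⟩ := geometric_hahn_banach_closed_point hconv hcl hp
  set d := (InnerProductSpace.toDual ℝ (EuclideanSpace ℝ (Fin n))).symm f with hdd
  have hfd : ∀ a, f a = ⟪d, a⟫_ℝ := fun a => by
    rw [hdd, InnerProductSpace.toDual_symm_apply]
  have hdmem : d ∈ suppDom C := mem_suppDom_of_bound (M := u) fun a ha => by
    rw [← hfd a]; exact (hfu a ha).le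
  have h0 : ⟪d, z⟫_ℝ ≤ 0 := hz d hdmem
  have hle : f (x + t • z) ≤ f x := by
    rw [hfd, hfd, inner_add_right, real_inner_smul_right]
    nlinarith
  linarith [hfu x hx, hup]

lemma mem_suppDom_of_polar_recCone {C : Set (EuclideanSpace ℝ (Fin n))}
    (hcl : IsClosed C) (hconv : Convex ℝ C) (hdcl : IsClosed (suppDom C))
    {d : EuclideanSpace ℝ (Fin n)} (hd : ∀ z ∈ recCone C, ⟪d, z⟫_ℝ ≤ 0) :
    d ∈ suppDom C := by
  by_contra hdd
  set K : ConvexCone ℝ (EuclideanSpace ℝ (Fin n)) :=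
    { carrier := suppDom C
      smul_mem' := by
        intro c hc e he
        have he' : suppFun C e < ⊤ := he
        rcases eq_or_ne (suppFun C e) ⊥ with hb | hb
        · exact mem_suppDom_of_bound (M := 0) fun x hx =>
            absurd (le_suppFun hx e) (by rw [hb]; simp)
        · have hMe : ∀ x ∈ C, ⟪e, x⟫_ℝ ≤ (suppFun C e).toReal := fun x hx => by
            have h := (le_suppFun hx e).trans_eq (EReal.coe_toReal he'.ne hb).symm
            exact_mod_cast h
          refine mem_suppDom_of_bound (M := c * (suppFun C e).toReal) fun x hx => ?_
          rw [real_inner_smul_left]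
          exact mul_le_mul_of_nonneg_left (hMe x hx) hc.le
      add_mem' := by
        intro e1 he1 e2 he2
        rcases eq_or_ne (suppFun C e1) ⊥ with hb | hb
        · exact mem_suppDom_of_bound (M := 0) fun x hx =>
            absurd (le_suppFun hx e1) (by rw [hb]; simp)
        rcases eq_or_ne (suppFun C e2) ⊥ with hb2 | hb2
        · exact mem_suppDom_of_bound (M := 0) fun x hx =>
            absurd (le_suppFun hx e2) (by rw [hb2]; simp)
        have h1 : ∀ x ∈ C, ⟪e1, x⟫_ℝ ≤ (suppFun C e1).toReal := fun x hx => by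
          have h := (le_suppFun hx e1).trans_eq (EReal.coe_toReal he1.ne hb).symm
          exact_mod_cast h
        have h2 : ∀ x ∈ C, ⟪e2, x⟫_ℝ ≤ (suppFun C e2).toReal := fun x hx => by
          have h := (le_suppFun hx e2).trans_eq (EReal.coe_toReal he2.ne hb2).symm
          exact_mod_cast h
        refine mem_suppDom_of_bound
          (M := (suppFun C e1).toReal + (suppFun C e2).toReal) fun x hx => ?_
        rw [inner_add_left]
        exact add_le_add (h1 x hx) (h2 x hx) }
  have hKset : (K : Set (EuclideanSpace ℝ (Fin n))) = suppDom C := rfl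
  obtain ⟨y, hy1, hy2⟩ : ∃ y, (∀ x ∈ K, 0 ≤ ⟪x, y⟫_ℝ) ∧ ⟪y, d⟫_ℝ < 0 := by
    let P : ProperCone ℝ (EuclideanSpace ℝ (Fin n)) :=
      { carrier := suppDom C
        add_mem' := fun ha hb => K.add_mem ha hb
        zero_mem' := zero_mem_suppDom
        smul_mem' := fun c x hx => by
          rcases eq_or_ne c 0 with h | h
          · subst h; simpa using (zero_mem_suppDom (C := C))
          · exact K.smul_mem (lt_of_le_of_ne c.2 (fun e => h (Subtype.ext e.symm))) hx
        isClosed' := hdcl }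
    obtain ⟨y, h1, h2⟩ := P.hyperplane_separation' hdd
    exact ⟨y, h1, by rw [real_inner_comm]; exact h2⟩
  have hyrec : -y ∈ recCone C := by
    refine mem_recCone_of_inner_nonpos hcl hconv fun e he => ?_
    have := hy1 e (by rw [← SetLike.mem_coe, hKset]; exact he)
    rw [inner_neg_right]
    linarith
  have := hd (-y) hyrec
  rw [inner_neg_right, real_inner_comm] at this
  linarith

end Aux3

open Topology

/-- if `dom σ_C` is closed and `σ_C` is continuous relative to
`dom σ_C`, then `C` is approximately M-decomposable. -/
theorem suppDom_closed_and_continuousOn_imp_approxMDecomposable {n : ℕ}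
    (C : Set (EuclideanSpace ℝ (Fin n)))
    (hne : C.Nonempty) (hcl : IsClosed C) (hconv : Convex ℝ C)
    (hdcl : IsClosed (suppDom C)) (hcont : ContinuousOn (suppFun C) (suppDom C)) :
    ApproxMDecomposable C := by
  intro ε hε
  by_contra hns
  push_neg at hns
  obtain ⟨x0, hx0⟩ := hne
  -- radii
  set R : ℕ → ℝ := fun k => ‖x0‖ + k + 1 with hR
  have hRpos : ∀ k, 0 < R k := fun k => by
    have : (0:ℝ) ≤ k := Nat.cast_nonneg k
    have := norm_nonneg x0
    simp only [hR]; linarith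
  have hx0R : ∀ k, x0 ∈ C ∩ closedBall 0 (R k) := fun k => by
    refine ⟨hx0, mem_closedBall_zero_iff.2 ?_⟩
    have : (0:ℝ) ≤ k := Nat.cast_nonneg k
    simp only [hR]; linarith
  -- bad points
  have hxk : ∀ k : ℕ, ∃ x ∈ C, x ∉ trunc C (R k) + closedBall 0 ε := fun k =>
    Set.not_subset.1 (hns (R k) (hRpos k))
  choose x hxC hxnot using hxk
  -- separating unit vectors
  have key : ∀ k : ℕ, ∃ d : EuclideanSpace ℝ (Fin n), ‖d‖ = 1 ∧
      ∀ w ∈ trunc C (R k), ⟪d, w⟫_ℝ + ε ≤ ⟪d, x k⟫_ℝ := by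
    intro k
    have hTne : (trunc C (R k)).Nonempty :=
      ⟨x0 + 0, Set.add_mem_add (hx0R k) zero_mem_recCone⟩
    have hTcl := isClosed_trunc hcl (R k)
    have hTconv := convex_trunc hconv (R k)
    obtain ⟨p, hp, heq⟩ :=
      exists_norm_eq_iInf_of_complete_convex hTne hTcl.isComplete hTconv (x k)
    have hobt := (norm_eq_iInf_iff_real_inner_le_zero hTconv hp).1 heq
    set v := x k - p with hv
    have hvnorm : ε < ‖v‖ := by
      by_contra hle
      push_neg at hle
      exact hxnot k (⟨p, hp, v, mem_closedBall_zero_iff.2 hle, by simp [hv]⟩)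
    have hvpos : (0:ℝ) < ‖v‖ := lt_of_le_of_lt hε.le hvnorm
    refine ⟨‖v‖⁻¹ • v, ?_, fun w hw => ?_⟩
    · rw [norm_smul, norm_inv, norm_norm, inv_mul_cancel₀ hvpos.ne']
    · have h1 : ⟪v, w - p⟫_ℝ ≤ 0 := hobt w hw
      rw [inner_sub_right] at h1
      have hxp : ⟪v, x k⟫_ℝ - ⟪v, p⟫_ℝ = ‖v‖ ^ 2 := by
        rw [← inner_sub_right, ← hv, real_inner_self_eq_norm_sq]
      rw [real_inner_smul_left, real_inner_smul_left]
      have hinv : (0:ℝ) < ‖v‖⁻¹ := inv_pos.2 hvpos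
      have h2 : ⟪v, w⟫_ℝ ≤ ⟪v, p⟫_ℝ := by linarith
      have h3 : ‖v‖⁻¹ * ⟪v, w⟫_ℝ ≤ ‖v‖⁻¹ * ⟪v, p⟫_ℝ :=
        mul_le_mul_of_nonneg_left h2 hinv.le
      have h4 : ‖v‖⁻¹ * ⟪v, x k⟫_ℝ = ‖v‖⁻¹ * ⟪v, p⟫_ℝ + ‖v‖ := by
        have : ‖v‖⁻¹ * (‖v‖ ^ 2) = ‖v‖ := by
          field_simp [pow_two]
        nlinarith [hxp]
      linarith
  choose d hd1 hd2 using key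
  -- each d k is in the polar of the recession cone, hence in suppDom C
  have hdom : ∀ k, d k ∈ suppDom C := by
    intro k
    refine mem_suppDom_of_polar_recCone hcl hconv hdcl fun z hz => ?_
    by_contra hpos
    push_neg at hpos
    have hb : ∀ t : ℝ, 0 ≤ t → ⟪d k, x0⟫_ℝ + t * ⟪d k, z⟫_ℝ + ε ≤ ⟪d k, x k⟫_ℝ := by
      intro t ht
      have hw : x0 + t • z ∈ trunc C (R k) :=
        Set.add_mem_add (hx0R k) (smul_mem_recCone hz ht)
      have := hd2 k _ hw
      rwa [inner_add_right, real_inner_smul_right] at this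
    set B := ⟪d k, x k⟫_ℝ - ⟪d k, x0⟫_ℝ - ε with hB
    have hB0 : 0 ≤ B := by have := hb 0 le_rfl; simp only [hB]; linarith
    have ht : (0:ℝ) ≤ (B + 1) / ⟪d k, z⟫_ℝ := div_nonneg (by linarith) hpos.le
    have := hb _ ht
    rw [div_mul_cancel₀ _ hpos.ne'] at this
    simp only [hB] at this
    linarith
  -- convergent subsequence on the unit sphere
  obtain ⟨dlim, hdlims, φ, hφ, hdconv⟩ :=
    (isCompact_sphere (0 : EuclideanSpace ℝ (Fin n)) 1).tendsto_subseq
      (fun k => mem_sphere_zero_iff_norm.2 (hd1 k))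
  have hdlimdom : dlim ∈ suppDom C :=
    hdcl.mem_of_tendsto hdconv (Filter.Eventually.of_forall fun k => hdom (φ k))
  -- continuity of the support function along the subsequence
  have hc1 : Tendsto (fun k => suppFun C (d (φ k))) atTop (𝓝 (suppFun C dlim)) :=
    (hcont dlim hdlimdom).tendsto.comp
      (tendsto_nhdsWithin_iff.2 ⟨hdconv, Filter.Eventually.of_forall fun k => hdom (φ k)⟩)
  set L : ℝ := (suppFun C dlim).toReal with hL
  have hc2 : Tendsto (fun k => (suppFun C (d (φ k))).toReal) atTop (𝓝 L) :=
    (EReal.tendsto_toReal hdlimdom.ne (suppFun_ne_bot ⟨x0, hx0⟩ dlim)).comp hc1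
  -- limit inequality for every point of C
  have hfin : ∀ y ∈ C, ⟪dlim, y⟫_ℝ + ε ≤ L := by
    intro y hy
    have hev : ∀ᶠ k in atTop,
        ⟪d (φ k), y⟫_ℝ + ε ≤ (suppFun C (d (φ k))).toReal := by
      filter_upwards [eventually_ge_atTop ⌈‖y‖⌉₊] with k hk
      have hkk : (⌈‖y‖⌉₊ : ℝ) ≤ (φ k : ℝ) := by
        exact_mod_cast le_trans hk (hφ.le_apply)
      have hyR : ‖y‖ ≤ R (φ k) := by
        have h1 : ‖y‖ ≤ (⌈‖y‖⌉₊ : ℝ) := Nat.le_ceil _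
        have := norm_nonneg x0
        simp only [hR]; linarith
      have hyT : y ∈ trunc C (R (φ k)) := by
        have : y + 0 ∈ trunc C (R (φ k)) :=
          Set.add_mem_add ⟨hy, mem_closedBall_zero_iff.2 hyR⟩ zero_mem_recCone
        simpa using this
      have h1 := hd2 (φ k) y hyT
      have h2 := inner_le_toReal_suppFun ⟨x0, hx0⟩ (hdom (φ k)) (hxC (φ k))
      linarith
    have hl : Tendsto (fun k => ⟪d (φ k), y⟫_ℝ + ε) atTop (𝓝 (⟪dlim, y⟫_ℝ + ε)) :=
      (hdconv.inner tendsto_const_nhds).add tendsto_const_nhds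
    exact le_of_tendsto_of_tendsto hl hc2 hev
  -- contradiction
  have hsup : suppFun C dlim ≤ ((L - ε : ℝ) : EReal) :=
    iSup₂_le fun y hy => EReal.coe_le_coe_iff.2 (by linarith [hfin y hy])
  rw [suppFun_eq_coe ⟨x0, hx0⟩ hdlimdom, ← hL, EReal.coe_le_coe_iff] at hsup
  linarith
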